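/- Every eigenvalue of the Hermitian positive semidefinite matrix R Σ R* is at most λ_{q+1}(Σ)/μ_q; in particular, its largest eigenvalue is bounded by the ratio of the (q+1)-th largest eigenvalue of Σ to the q-th largest eigenvalue of its m×m top-left submatrix. -/

import Mathlib

open Matrix ComplexOrder

/-- The `j`-th largest eigenvalue (1-indexed) of a Hermitian complex matrix
(junk value otherwise). -/
noncomputable def eigJ {n : ℕ} (A : Matrix (Fin n) (Fin n) ℂ) (j : ℕ) : ℝ :=
  if hA : A.IsHermitian then
    ((Finset.univ.val.map hA.eigenvalues).sort (· ≤ ·)).getD (n - j) 0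
  else 0

lemma eigJ_mem {n : ℕ} {A : Matrix (Fin n) (Fin n) ℂ} (hA : A.IsHermitian) {j : ℕ}
    (h1 : 1 ≤ j) (h2 : j ≤ n) : ∃ i, hA.eigenvalues i = eigJ A j := by
  rw [eigJ, dif_pos hA]
  set l := (Finset.univ.val.map hA.eigenvalues).sort (· ≤ ·) with hl
  have hlen : l.length = n := by
    simp [hl, Multiset.length_sort]
  have hlt : n - j < l.length := by
    rw [hlen]; omega
  rw [List.getD_eq_getElem l 0 hlt]
  have hmem : l[n-j] ∈ l := List.getElem_mem hlt
  have hmem' : l[n-j] ∈ Multiset.map hA.eigenvalues Finset.univ.val :=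
    (Multiset.mem_sort _).mp hmem
  obtain ⟨i, _, hi⟩ := Multiset.mem_map.mp hmem'
  exact ⟨i, hi⟩

lemma eigJ_anti {n : ℕ} {A : Matrix (Fin n) (Fin n) ℂ} (hA : A.IsHermitian) {j k : ℕ}
    (h1 : 1 ≤ j) (hjk : j ≤ k) (h2 : k ≤ n) : eigJ A k ≤ eigJ A j := by
  rw [eigJ, dif_pos hA, eigJ, dif_pos hA]
  set l := (Finset.univ.val.map hA.eigenvalues).sort (· ≤ ·) with hl
  have hlen : l.length = n := by simp [hl, Multiset.length_sort]
  have hltk : n - k < l.length := by rw [hlen]; omega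
  have hltj : n - j < l.length := by rw [hlen]; omega
  rw [List.getD_eq_getElem l 0 hltk, List.getD_eq_getElem l 0 hltj]
  have hs : l.Pairwise (· ≤ ·) := by rw [hl]; apply Multiset.pairwise_sort
  rcases eq_or_lt_of_le (show n - k ≤ n - j by omega) with h | h
  · simp only [h]; exact le_rfl
  · exact List.pairwise_iff_getElem.mp hs _ _ hltk hltj h

lemma posSemidef_real_smul {k : ℕ} {M : Matrix (Fin k) (Fin k) ℂ} (hM : M.PosSemidef)
    {a : ℝ} (ha : 0 ≤ a) : ((a : ℂ) • M).PosSemidef := by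
  refine Matrix.PosSemidef.of_dotProduct_mulVec_nonneg ?_ ?_
  · unfold Matrix.IsHermitian
    rw [conjTranspose_smul, hM.1.eq]
    congr 1
    simp [Complex.star_def, Complex.conj_ofReal]
  · intro x
    rw [smul_mulVec, dotProduct_smul, smul_eq_mul]
    exact mul_nonneg (by exact_mod_cast ha) (hM.dotProduct_mulVec_nonneg x)

lemma eig_le_of_psd {k : ℕ} {H : Matrix (Fin k) (Fin k) ℂ} (hH : H.IsHermitian) {c : ℝ}
    (hpsd : ((c : ℂ) • (1 : Matrix (Fin k) (Fin k) ℂ) - H).PosSemidef) (i : Fin k) :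
    hH.eigenvalues i ≤ c := by
  set v : Fin k → ℂ := ⇑(hH.eigenvectorBasis i) with hv_def
  have hv : H *ᵥ v = (hH.eigenvalues i : ℂ) • v := by
    have h := hH.mulVec_eigenvectorBasis i
    rw [hv_def]
    rw [h]
    funext t
    simp [Complex.real_smul]
  have hvne : v ≠ 0 := by
    have := hH.eigenvectorBasis.orthonormal.ne_zero i
    intro h
    apply this
    ext t
    exact congrFun h t
  set lam := hH.eigenvalues i with hlam
  have key := hpsd.dotProduct_mulVec_nonneg v
  rw [sub_mulVec, smul_mulVec, one_mulVec, hv, dotProduct_sub, dotProduct_smul,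
    dotProduct_smul] at key
  have ht : star v ⬝ᵥ v = ((∑ t, Complex.normSq (v t) : ℝ) : ℂ) := by
    simp only [dotProduct, Pi.star_apply, Complex.star_def]
    push_cast
    congr 1
    funext t
    rw [Complex.normSq_eq_conj_mul_self]
  rw [ht] at key
  have hr : 0 < (∑ t, Complex.normSq (v t) : ℝ) := by
    obtain ⟨t0, ht0⟩ := Function.ne_iff.mp hvne
    exact Finset.sum_pos' (fun _ _ => Complex.normSq_nonneg _)
      ⟨t0, Finset.mem_univ _, Complex.normSq_pos.mpr ht0⟩
  set r := (∑ t, Complex.normSq (v t) : ℝ)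
  have key2 : (0:ℂ) ≤ (((c - lam) * r : ℝ) : ℂ) := by
    convert key using 1
    simp only [smul_eq_mul]
    push_cast
    ring
  rw [Complex.zero_le_real] at key2
  nlinarith

lemma sum_dite_fin {m n : ℕ} (hmn : m ≤ n) (f : Fin m → ℂ) :
    (∑ i : Fin n, if h : (i:ℕ) < m then f ⟨i,h⟩ else 0) = ∑ i : Fin m, f i := by
  classical
  set s : Finset (Fin n) := (Finset.univ : Finset (Fin m)).map
    ⟨Fin.castLE hmn, Fin.castLE_injective hmn⟩ with hs
  have hz : ∀ x ∈ (Finset.univ : Finset (Fin n)), x ∉ s →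
      (if h : (x:ℕ) < m then f ⟨x,h⟩ else 0) = 0 := by
    intro x _ hx
    rw [dif_neg]
    intro hxm
    exact hx (Finset.mem_map.mpr ⟨⟨x, hxm⟩, Finset.mem_univ _, Fin.ext rfl⟩)
  rw [← Finset.sum_subset (Finset.subset_univ s) hz, hs, Finset.sum_map]
  apply Finset.sum_congr rfl
  intro i _
  have hi : ((Fin.castLE hmn i : Fin n) : ℕ) < m := by simpa using i.isLt
  simp only [Function.Embedding.coeFn_mk]
  rw [dif_pos hi]
  congr 1

set_option maxHeartbeats 1600000 in
/-- with `S` an n×n Hermitian PSD matrix, `Sm` its top-left m×m submatrix,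
`P` the q×m matrix of (conjugate-transposed) orthonormal eigenvectors of `Sm` for its `q`
largest eigenvalues (padded with zeros to `Pt`), `Λ` the diagonal of those eigenvalues,
`Q` the (n−q)×n matrix of orthonormal eigenvectors of `S` for its n−q smallest eigenvalues,
`C` a q×q matrix with `C Cᴴ = 1`, and `R = C Λ^{-1/2} Pt Qᴴ Q`:
every eigenvalue of `R S Rᴴ` (in particular the largest) is at most
`λ_{q+1}(S) / μ_q(Sm)`. -/
theorem stmt_13 {q m n : ℕ} (hq : 0 < q) (hqm : q ≤ m) (hmn : m ≤ n) (hqn : q < n)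
    (S : Matrix (Fin n) (Fin n) ℂ) (hS : S.PosSemidef)
    (Sm : Matrix (Fin m) (Fin m) ℂ)
    (hSm : Sm = S.submatrix (Fin.castLE hmn) (Fin.castLE hmn))
    (hμq : 0 < eigJ Sm q)
    (u : Fin q → Fin m → ℂ)
    (hu_orth : ∀ j k, star (u j) ⬝ᵥ u k = if j = k then 1 else 0)
    (hu_eig : ∀ j : Fin q, Sm.mulVec (u j) = (eigJ Sm ((j : ℕ) + 1) : ℂ) • u j)
    (w : Fin (n - q) → Fin n → ℂ)
    (hw_orth : ∀ j k, star (w j) ⬝ᵥ w k = if j = k then 1 else 0)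
    (hw_eig : ∀ j : Fin (n - q), S.mulVec (w j) = (eigJ S (q + (j : ℕ) + 1) : ℂ) • w j)
    (P : Matrix (Fin q) (Fin m) ℂ) (hP : P = Matrix.of fun j i => star (u j i))
    (Pt : Matrix (Fin q) (Fin n) ℂ)
    (hPt : Pt = Matrix.of fun j (i : Fin n) =>
      if h : (i : ℕ) < m then P j ⟨(i : ℕ), h⟩ else 0)
    (Q : Matrix (Fin (n - q)) (Fin n) ℂ)
    (hQ : Q = Matrix.of fun j i => star (w j i))
    (C : Matrix (Fin q) (Fin q) ℂ) (hC : C * Cᴴ = 1)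
    (R : Matrix (Fin q) (Fin n) ℂ)
    (hR : R = C * Matrix.diagonal
        (fun j : Fin q => (((Real.sqrt (eigJ Sm ((j : ℕ) + 1)))⁻¹ : ℝ) : ℂ)) * Pt * Qᴴ * Q) :
    ∀ j : ℕ, 1 ≤ j → j ≤ q →
      eigJ (R * S * Rᴴ) j ≤ eigJ S (q + 1) / eigJ Sm q := by
  intro j hj1 hjq
  have hSH : S.IsHermitian := hS.1
  have hSmH : Sm.IsHermitian := by rw [hSm]; exact hSH.submatrix _
  set lam : ℝ := eigJ S (q + 1) with hlam_def
  set μ : ℝ := eigJ Sm q with hμ_def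
  -- basic scalar facts
  have hmu_ge : ∀ i : Fin q, μ ≤ eigJ Sm ((i : ℕ) + 1) := fun i =>
    eigJ_anti hSmH (by omega) (by omega) hqm
  have hmu_pos : ∀ i : Fin q, 0 < eigJ Sm ((i : ℕ) + 1) := fun i =>
    lt_of_lt_of_le hμq (hmu_ge i)
  have hlam_ge : ∀ i : Fin (n - q), eigJ S (q + (i : ℕ) + 1) ≤ lam := fun i =>
    eigJ_anti hSH (by omega) (by omega) (by omega)
  have hlam_nonneg : 0 ≤ lam := by
    obtain ⟨i, hi⟩ := eigJ_mem hSH (j := q + 1) (by omega) (by omega)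
    rw [hlam_def, ← hi]
    exact hS.eigenvalues_nonneg i
  -- matrix abbreviations
  set Λh : Matrix (Fin q) (Fin q) ℂ := Matrix.diagonal
      (fun j : Fin q => (((Real.sqrt (eigJ Sm ((j : ℕ) + 1)))⁻¹ : ℝ) : ℂ)) with hΛh_def
  set D : Matrix (Fin (n - q)) (Fin (n - q)) ℂ := Matrix.diagonal
      (fun kk : Fin (n - q) => ((eigJ S (q + (kk : ℕ) + 1) : ℝ) : ℂ)) with hD_def
  set B : Matrix (Fin q) (Fin n) ℂ := C * Λh * Pt with hB_def
  set A : Matrix (Fin q) (Fin (n - q)) ℂ := B * Qᴴ with hA_def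
  have hΛhH : Λhᴴ = Λh := by
    have hstar : (star fun j : Fin q => (((Real.sqrt (eigJ Sm ((j:ℕ)+1)))⁻¹ : ℝ) : ℂ))
        = fun j : Fin q => (((Real.sqrt (eigJ Sm ((j:ℕ)+1)))⁻¹ : ℝ) : ℂ) := by
      funext i
      simp [Pi.star_apply, Complex.star_def, Complex.conj_ofReal]
    rw [hΛh_def, Matrix.diagonal_conjTranspose, hstar]
  -- orthonormality facts
  have hQQ : Q * Qᴴ = 1 := by
    ext a b
    have h1 : (Q * Qᴴ) a b = star (w a) ⬝ᵥ w b := by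
      rw [Matrix.mul_apply]
      simp [hQ, Matrix.conjTranspose_apply, dotProduct]
    rw [h1, hw_orth a b, Matrix.one_apply]
  have hQSQ : Q * S * Qᴴ = D := by
    ext a b
    have h1 : (Q * S * Qᴴ) a b = star (w a) ⬝ᵥ (S *ᵥ w b) := by
      rw [Matrix.mul_assoc, Matrix.mul_apply]
      simp only [dotProduct, hQ, Matrix.of_apply, Pi.star_apply]
      congr 1
      funext i
      congr 1
      rw [Matrix.mul_apply, Matrix.mulVec, dotProduct]
      simp [Matrix.conjTranspose_apply, hQ]
    rw [h1, hw_eig b, dotProduct_smul, hw_orth a b, hD_def]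
    rw [Matrix.diagonal_apply]
    split_ifs with h
    · subst h; simp
    · simp
  have hPtPt : Pt * Ptᴴ = 1 := by
    ext a b
    rw [Matrix.mul_apply]
    have hterm : ∀ i : Fin n, Pt a i * (Ptᴴ) i b =
        (if h : (i:ℕ) < m then (star (u a ⟨i,h⟩) * u b ⟨i,h⟩) else 0) := by
      intro i
      rw [Matrix.conjTranspose_apply, hPt]
      simp only [Matrix.of_apply]
      by_cases h : (i:ℕ) < m
      · rw [dif_pos h, dif_pos h, dif_pos h, hP]
        simp [star_star]
      · rw [dif_neg h, dif_neg h, dif_neg h]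
        simp
    simp_rw [hterm]
    rw [sum_dite_fin hmn (fun i => star (u a i) * u b i)]
    have horth := hu_orth a b
    simp only [dotProduct, Pi.star_apply] at horth
    rw [horth, Matrix.one_apply]
  -- R S Rᴴ = A D Aᴴ
  have hRA : R = A * Q := by rw [hR, hA_def, hB_def]
  have hRS : R * S * Rᴴ = A * D * Aᴴ := by
    have h2 : R * S * Rᴴ = A * (Q * S * Qᴴ) * Aᴴ := by
      rw [hRA]
      simp only [conjTranspose_mul, Matrix.mul_assoc]
    rw [h2, hQSQ]
  -- positive semidefinite building blocks
  have psd1 : ((lam : ℂ) • (1 : Matrix (Fin (n-q)) (Fin (n-q)) ℂ) - D).PosSemidef := by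
    have hEq : (lam : ℂ) • (1 : Matrix (Fin (n-q)) (Fin (n-q)) ℂ) - D
        = Matrix.diagonal (fun kk : Fin (n-q) => ((lam - eigJ S (q + (kk:ℕ) + 1) : ℝ) : ℂ)) := by
      ext a b
      rcases eq_or_ne a b with rfl | h
      · simp only [hD_def, Matrix.sub_apply, Matrix.smul_apply, Matrix.one_apply_eq,
          Matrix.diagonal_apply_eq, smul_eq_mul]
        push_cast
        ring
      · simp [hD_def, Matrix.sub_apply, Matrix.smul_apply, Matrix.one_apply_ne h,
          Matrix.diagonal_apply_ne _ h]
    rw [hEq]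
    refine Matrix.PosSemidef.diagonal ?_
    intro kk
    exact Complex.zero_le_real.mpr (sub_nonneg.mpr (hlam_ge kk))
  have psd2 : ((1 : Matrix (Fin n) (Fin n) ℂ) - Qᴴ * Q).PosSemidef := by
    have hproj : ((1 : Matrix (Fin n) (Fin n) ℂ) - Qᴴ * Q)ᴴ *
        ((1 : Matrix (Fin n) (Fin n) ℂ) - Qᴴ * Q) = (1 : Matrix (Fin n) (Fin n) ℂ) - Qᴴ * Q := by
      have h2 : (Qᴴ * Q) * (Qᴴ * Q) = Qᴴ * Q := by
        rw [Matrix.mul_assoc, ← Matrix.mul_assoc Q, hQQ, Matrix.one_mul]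
      rw [conjTranspose_sub, conjTranspose_one, conjTranspose_mul, conjTranspose_conjTranspose,
        Matrix.mul_sub, Matrix.sub_mul, Matrix.sub_mul, Matrix.mul_one, Matrix.one_mul, h2]
      simp only [Matrix.mul_one, Matrix.one_mul]
      abel
    rw [← hproj]
    exact Matrix.posSemidef_conjTranspose_mul_self _
  have psd3 : (((μ⁻¹ : ℝ) : ℂ) • (1 : Matrix (Fin q) (Fin q) ℂ) - Λh * Λh).PosSemidef := by
    have hEq : ((μ⁻¹ : ℝ) : ℂ) • (1 : Matrix (Fin q) (Fin q) ℂ) - Λh * Λh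
        = Matrix.diagonal (fun i : Fin q => ((μ⁻¹ - (eigJ Sm ((i:ℕ) + 1))⁻¹ : ℝ) : ℂ)) := by
      rw [hΛh_def, Matrix.diagonal_mul_diagonal]
      ext a b
      rcases eq_or_ne a b with rfl | h
      · have hss : (Real.sqrt (eigJ Sm ((a:ℕ) + 1)))⁻¹ * (Real.sqrt (eigJ Sm ((a:ℕ) + 1)))⁻¹
            = (eigJ Sm ((a:ℕ) + 1))⁻¹ := by
          rw [← mul_inv, Real.mul_self_sqrt (hmu_pos a).le]
        simp only [Matrix.sub_apply, Matrix.smul_apply, Matrix.one_apply_eq,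
          Matrix.diagonal_apply_eq, smul_eq_mul]
        rw [← hss]
        push_cast
        ring
      · simp [Matrix.sub_apply, Matrix.smul_apply, Matrix.one_apply_ne h,
          Matrix.diagonal_apply_ne _ h]
    rw [hEq]
    refine Matrix.PosSemidef.diagonal ?_
    intro i
    exact Complex.zero_le_real.mpr (sub_nonneg.mpr (inv_anti₀ hμq (hmu_ge i)))
  -- helper cancellation
  have hPtM : ∀ M : Matrix (Fin q) (Fin q) ℂ, Pt * (Ptᴴ * M) = M := by
    intro M
    rw [← Matrix.mul_assoc, hPtPt, Matrix.one_mul]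
  have hc : ((lam / μ : ℝ) : ℂ) = (lam : ℂ) * ((μ⁻¹ : ℝ) : ℂ) := by
    push_cast
    ring
  -- the key decomposition
  have key : ((lam / μ : ℝ) : ℂ) • (1 : Matrix (Fin q) (Fin q) ℂ) - R * S * Rᴴ
      = A * ((lam : ℂ) • (1 : Matrix (Fin (n-q)) (Fin (n-q)) ℂ) - D) * Aᴴ
        + (((lam : ℂ) • (C * ((((μ⁻¹ : ℝ) : ℂ)) • (1 : Matrix (Fin q) (Fin q) ℂ) - Λh * Λh) * Cᴴ))
          + ((lam : ℂ) • (B * ((1 : Matrix (Fin n) (Fin n) ℂ) - Qᴴ * Q) * Bᴴ))) := by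
    rw [hRS, hc]
    simp only [hA_def, hB_def, Matrix.mul_sub, Matrix.sub_mul, Matrix.mul_smul, Matrix.smul_mul,
      Matrix.mul_one, Matrix.one_mul, conjTranspose_mul, hΛhH, Matrix.mul_assoc, hPtM, hC,
      smul_smul, smul_sub, conjTranspose_conjTranspose]
    abel
  -- assemble positive semidefiniteness
  have hpsd : (((lam / μ : ℝ) : ℂ) • (1 : Matrix (Fin q) (Fin q) ℂ) - R * S * Rᴴ).PosSemidef := by
    rw [key]
    refine Matrix.PosSemidef.add (psd1.mul_mul_conjTranspose_same A) (Matrix.PosSemidef.add ?_ ?_)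
    · exact posSemidef_real_smul (psd3.mul_mul_conjTranspose_same C) hlam_nonneg
    · exact posSemidef_real_smul (psd2.mul_mul_conjTranspose_same B) hlam_nonneg
  -- conclude
  have hHH : (R * S * Rᴴ).IsHermitian :=
    Matrix.isHermitian_mul_mul_conjTranspose R hSH
  obtain ⟨i, hi⟩ := eigJ_mem hHH hj1 hjq
  rw [← hi]
  exact eig_le_of_psd hHH hpsd i
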